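/- Let (S, μ) be a measure space, let E be a real inner product space, and let p > 1. Let G, U : S → E be strongly measurable maps with ∫_S ‖G‖^p dμ < ∞ and ∫_S ‖U‖^p dμ < ∞, and define h : S → ℝ by h(x) = ‖G(x)‖^{p−2} ⟨G(x), U(x) − G(x)⟩ (interpreted as 0 when G(x) = 0). If h is integrable and ∫_S h dμ = 0, then ∫_S ‖G‖^p dμ ≤ ∫_S ‖U‖^p dμ. -/

import Mathlib

open MeasureTheory
open scoped RealInnerProductSpace

/-- Abstract first comparison estimate: testing the homogeneous constant-coefficient
equation with `U - G` yields `∫ ‖G‖^p ≤ ∫ ‖U‖^p`. -/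
theorem comparison_energy {S : Type*} [MeasurableSpace S] (μ : Measure S)
    {E : Type*} [NormedAddCommGroup E] [InnerProductSpace ℝ E]
    (p : ℝ) (hp : 1 < p) (G U : S → E)
    (hGm : StronglyMeasurable G) (hUm : StronglyMeasurable U)
    (hGp : Integrable (fun x => ‖G x‖ ^ p) μ)
    (hUp : Integrable (fun x => ‖U x‖ ^ p) μ)
    (h : S → ℝ)
    (hdef : ∀ x, h x = ‖G x‖ ^ (p - 2) * ⟪G x, U x - G x⟫)
    (hG0 : ∀ x, G x = 0 → h x = 0)
    (hint : Integrable h μ) (hzero : ∫ x, h x ∂μ = 0) :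
    ∫ x, ‖G x‖ ^ p ∂μ ≤ ∫ x, ‖U x‖ ^ p ∂μ := by
  have hp0 : (0:ℝ) < p := lt_trans one_pos hp
  have hpq : (p / (p - 1)).HolderConjugate p :=
    (Real.HolderConjugate.conjExponent hp).symm
  -- pointwise estimate: h x ≤ (1/p) * (‖U x‖^p - ‖G x‖^p)
  have key : ∀ x, h x ≤ (1/p) * (‖U x‖ ^ p - ‖G x‖ ^ p) := by
    intro x
    by_cases hGx : G x = 0
    · rw [hG0 x hGx, hGx]
      rw [norm_zero, Real.zero_rpow hp0.ne', sub_zero]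
      have : (0:ℝ) ≤ ‖U x‖ ^ p := Real.rpow_nonneg (norm_nonneg _) p
      positivity
    · set a := ‖G x‖ with ha
      have ha0 : 0 < a := norm_pos_iff.mpr hGx
      set b := ‖U x‖ with hb
      have hb0 : 0 ≤ b := norm_nonneg _
      have hcs : ⟪G x, U x - G x⟫ ≤ a * b - a ^ (2:ℝ) := by
        have h1 : ⟪G x, U x - G x⟫ = ⟪G x, U x⟫ - ⟪G x, G x⟫ := by
          rw [inner_sub_right]
        have h2 : ⟪G x, U x⟫ ≤ a * b := real_inner_le_norm (G x) (U x)
        have h3 : ⟪G x, G x⟫ = a ^ (2:ℝ) := by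
          rw [real_inner_self_eq_norm_sq, ← Real.rpow_natCast a 2]
          norm_num
        rw [h1, h3]; linarith
      have hstep : h x ≤ a ^ (p-1) * b - a ^ p := by
        rw [hdef x]
        have hap : 0 ≤ a ^ (p - 2 : ℝ) := Real.rpow_nonneg ha0.le _
        calc a ^ (p-2) * ⟪G x, U x - G x⟫
            ≤ a ^ (p-2) * (a * b - a ^ (2:ℝ)) := by
              exact mul_le_mul_of_nonneg_left hcs hap
          _ = a ^ (p-1) * b - a ^ p := by
              rw [mul_sub, ← Real.rpow_add ha0, ← mul_assoc,
                ← Real.rpow_add_one ha0.ne' (p-2)]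
              ring_nf
      -- Young's inequality
      have hyoung : a ^ (p-1) * b ≤ (1 - 1/p) * a ^ p + (1/p) * b ^ p := by
        have := Real.young_inequality_of_nonneg
          (Real.rpow_nonneg ha0.le (p-1)) hb0 hpq
        have hq : (a ^ (p-1)) ^ (p / (p-1)) = a ^ p := by
          rw [← Real.rpow_mul ha0.le]
          congr 1
          have h1 : p - 1 ≠ 0 := by linarith
          field_simp
        rw [hq] at this
        have hdiv : a ^ p / (p / (p-1)) = (1 - 1/p) * a ^ p := by
          have h1 : p - 1 ≠ 0 := by linarith
          field_simp
        calc a ^ (p-1) * b ≤ a ^ p / (p / (p-1)) + b ^ p / p := this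
          _ = (1 - 1/p) * a ^ p + (1/p) * b ^ p := by rw [hdiv]; ring
      linarith
  have hInt : Integrable (fun x => (1/p) * (‖U x‖ ^ p - ‖G x‖ ^ p)) μ :=
    ((hUp.sub hGp).const_mul _)
  have := integral_mono hint hInt key
  rw [hzero, integral_const_mul, integral_sub hUp hGp] at this
  have hpinv : (0:ℝ) < 1/p := by positivity
  nlinarith [this, hpinv]
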